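/- Let G be a simple graph on a vertex type V, let P be a walk from u to v in G, and let w : Sym2 V → ℕ be finitely supported with w e = 0 for every e not appearing in the edge list of P. Then there exists a walk Q from u to v in G such that for every edge e, the number of occurrences of e in the edge list of Q equals the number of occurrences of e in the edge list of P plus 2·(w e), and the length of Q equals the length of P plus 2·∑_e (w e). (The walk Q is obtained from P by inserting w e back-and-forth local loops over each edge e.) -/

import Mathlib

private lemma insert_one_loop {V : Type*} [DecidableEq V] {G : SimpleGraph V}
    {u v : V} (P : G.Walk u v) (e : Sym2 V) (he : e ∈ P.edges) :
    ∃ Q : G.Walk u v,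
      (∀ f, Q.edges.count f = P.edges.count f + (if f = e then 2 else 0)) ∧
      Q.length = P.length + 2 := by
  induction P with
  | nil => simp at he
  | @cons a b c h p ih =>
    rw [SimpleGraph.Walk.edges_cons, List.mem_cons] at he
    rcases he with he | he
    · refine ⟨.cons h (.cons h.symm (.cons h p)), ?_, ?_⟩
      · intro f
        subst he
        simp only [SimpleGraph.Walk.edges_cons, List.count_cons]
        have : s(b, a) = s(a, b) := Sym2.eq_swap
        rw [this]
        rcases eq_or_ne f s(a, b) with hf | hf
        · subst hf; simp
        · simp [hf, hf.symm]
      · simp [SimpleGraph.Walk.length_cons]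
    · obtain ⟨q, hq1, hq2⟩ := ih he
      refine ⟨.cons h q, ?_, ?_⟩
      · intro f
        simp only [SimpleGraph.Walk.edges_cons, List.count_cons, hq1]
        omega
      · simp [SimpleGraph.Walk.length_cons, hq2]

private lemma insert_loops {V : Type*} [DecidableEq V] {G : SimpleGraph V}
    {u v : V} (P : G.Walk u v) (e : Sym2 V) (he : e ∈ P.edges) (n : ℕ) :
    ∃ Q : G.Walk u v,
      (∀ f, Q.edges.count f = P.edges.count f + (if f = e then 2 * n else 0)) ∧
      Q.length = P.length + 2 * n := by
  induction n with
  | zero => exact ⟨P, by simp, by simp⟩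
  | succ m ih =>
    obtain ⟨q, hq1, hq2⟩ := ih
    have he' : e ∈ q.edges := by
      rw [← List.count_pos_iff] at he ⊢
      rw [hq1]; omega
    obtain ⟨Q, hQ1, hQ2⟩ := insert_one_loop q e he'
    refine ⟨Q, fun f => ?_, by omega⟩
    rw [hQ1, hq1]
    by_cases hf : f = e <;> simp [hf] <;> omega

theorem exists_weighted_walk {V : Type*} [DecidableEq V] (G : SimpleGraph V)
    {u v : V} (P : G.Walk u v) (w : Sym2 V →₀ ℕ)
    (hw : ∀ e, e ∉ P.edges → w e = 0) :
    ∃ Q : G.Walk u v,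
      (∀ e, Q.edges.count e = P.edges.count e + 2 * w e) ∧
      Q.length = P.length + 2 * ∑ e ∈ w.support, w e := by
  induction w using Finsupp.induction with
  | zero => exact ⟨P, by simp, by simp⟩
  | single_add a b f ha hb ih =>
    have hfw : ∀ e, e ∉ P.edges → f e = 0 := by
      intro e hePe
      have := hw e hePe
      simp only [Finsupp.add_apply] at this
      omega
    have haP : a ∈ P.edges := by
      by_contra hcon
      have := hw a hcon
      simp [Finsupp.single_apply] at this
      exact hb this.1
    obtain ⟨q, hq1, hq2⟩ := ih hfw
    have haq : a ∈ q.edges := by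
      rw [← List.count_pos_iff] at haP ⊢
      rw [hq1]; omega
    obtain ⟨Q, hQ1, hQ2⟩ := insert_loops q a haq b
    have hsum : ∑ e ∈ (Finsupp.single a b + f).support, (Finsupp.single a b + f) e
        = b + ∑ e ∈ f.support, f e := by
      rw [show (∑ e ∈ (Finsupp.single a b + f).support, (Finsupp.single a b + f) e)
            = (Finsupp.single a b + f).sum (fun _ m => m) from rfl,
          Finsupp.sum_add_index' (fun _ => rfl) (fun _ _ _ => rfl),
          Finsupp.sum_single_index rfl]
      rfl
    refine ⟨Q, fun e => ?_, by rw [hsum]; omega⟩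
    rw [hQ1, hq1]
    simp only [Finsupp.add_apply, Finsupp.single_apply]
    rcases eq_or_ne e a with he | he
    · subst he; simp; omega
    · rw [if_neg he, if_neg he.symm]; omega
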